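/- In classical (extensional) logic, the intensional characterization of an infinite singleton collapses to an ordinary singleton: if V is a set in a type α such that for every predicate A : α → Prop the statements (∀ x ∈ V, A x) and (∃ x ∈ V, A x) are equivalent, then there exists z with V = {z}. -/
import Mathlib

/-- In classical (extensional) logic, a set V such that universal and
existential quantification over V coincide for every predicate is an ordinary
singleton. -/
theorem infinite_singleton_collapses {α : Type*} (V : Set α)
    (h : ∀ A : α → Prop, (∀ x ∈ V, A x) ↔ (∃ x ∈ V, A x)) :
    ∃ z : α, V = {z} := by
  obtain ⟨z, hz, -⟩ := (h fun _ => True).mp (fun _ _ => trivial)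
  refine ⟨z, Set.eq_singleton_iff_unique_mem.mpr ⟨hz, fun y hy => ?_⟩⟩
  exact (h (· = z)).mpr ⟨z, hz, rfl⟩ y hy
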